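/- First-order unification produces most general unifiers: if two first-order terms t and s are unifiable, then there exists a unifier σ such that every unifier τ of t and s factors as τ = σ followed by some substitution ρ. -/

import Mathlib

open FirstOrder FirstOrder.Language Finset

namespace MGUaux

variable {L : Language} {V : Type}

/-- Size of a first-order term. -/
def tsize : L.Term V → ℕ
  | .var _ => 1
  | .func _ ts => 1 + ∑ i, tsize (ts i)

lemma tsize_pos (t : L.Term V) : 0 < tsize t := by
  cases t <;> simp [tsize]

lemma subst_comp (t : L.Term V) (σ σ' : V → L.Term V) :
    (t.subst σ).subst σ' = t.subst fun x => (σ x).subst σ' := by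
  induction t with
  | var => simp
  | func f ts ih => simp [ih]

lemma subst_congr [DecidableEq V] {t : L.Term V} {σ σ' : V → L.Term V}
    (h : ∀ x ∈ t.varFinset, σ x = σ' x) : t.subst σ = t.subst σ' := by
  induction t with
  | var x => exact h x (by simp)
  | func f ts ih =>
    simp only [Term.subst]
    congr 1
    funext i
    exact ih i fun x hx =>
      h x (by simp only [Term.varFinset, mem_biUnion]; exact ⟨i, mem_univ i, hx⟩)

lemma subst_var' (t : L.Term V) : t.subst Term.var = t := by
  induction t with
  | var => simp
  | func f ts ih => simp [ih]

lemma mem_varFinset_subst [DecidableEq V] {t : L.Term V} {σ : V → L.Term V} {y : V}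
    (h : y ∈ (t.subst σ).varFinset) : ∃ z ∈ t.varFinset, y ∈ (σ z).varFinset := by
  induction t with
  | var x => exact ⟨x, by simpa using h⟩
  | func f ts ih =>
    simp only [Term.subst, Term.varFinset, mem_biUnion] at h
    obtain ⟨i, -, hi⟩ := h
    obtain ⟨z, hz, hy⟩ := ih i hi
    exact ⟨z, by simp only [Term.varFinset, mem_biUnion]; exact ⟨⟨i, mem_univ i, hz⟩, hy⟩⟩

lemma tsize_subst_le [DecidableEq V] {x : V} {t : L.Term V} (h : x ∈ t.varFinset)
    (τ : V → L.Term V) : tsize (τ x) ≤ tsize (t.subst τ) := by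
  induction t with
  | var y => simp at h; subst h; simp [tsize]
  | func f ts ih =>
    simp only [Term.varFinset, mem_biUnion] at h
    obtain ⟨i, -, hi⟩ := h
    calc tsize (τ x) ≤ tsize ((ts i).subst τ) := ih i hi
      _ ≤ ∑ j, tsize ((ts j).subst τ) :=
        Finset.single_le_sum (f := fun j => tsize ((ts j).subst τ))
          (fun j _ => Nat.zero_le _) (mem_univ i)
      _ ≤ tsize ((Term.func f ts).subst τ) := by simp [tsize]

lemma tsize_subst_lt [DecidableEq V] {x : V} {t : L.Term V} (h : x ∈ t.varFinset)
    (hne : t ≠ Term.var x) (τ : V → L.Term V) : tsize (τ x) < tsize (t.subst τ) := by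
  cases t with
  | var y => simp at h; subst h; exact absurd rfl hne
  | func f ts =>
    simp only [Term.varFinset, mem_biUnion] at h
    obtain ⟨i, -, hi⟩ := h
    calc tsize (τ x) ≤ tsize ((ts i).subst τ) := tsize_subst_le hi τ
      _ ≤ ∑ j, tsize ((ts j).subst τ) :=
        Finset.single_le_sum (f := fun j => tsize ((ts j).subst τ))
          (fun j _ => Nat.zero_le _) (mem_univ i)
      _ < tsize ((Term.func f ts).subst τ) := by simp [tsize]

/-- Free variables of a system of equations. -/
def fvE [DecidableEq V] : List (L.Term V × L.Term V) → Finset V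
  | [] => ∅
  | p :: E => p.1.varFinset ∪ p.2.varFinset ∪ fvE E

def sizeE (E : List (L.Term V × L.Term V)) : ℕ :=
  (E.map fun p => tsize p.1 + tsize p.2).sum

def Unif (τ : V → L.Term V) (E : List (L.Term V × L.Term V)) : Prop :=
  ∀ p ∈ E, p.1.subst τ = p.2.subst τ

lemma mem_fvE [DecidableEq V] {y : V} {E : List (L.Term V × L.Term V)} :
    y ∈ fvE E ↔ ∃ p ∈ E, y ∈ p.1.varFinset ∨ y ∈ p.2.varFinset := by
  induction E with
  | nil => simp [fvE]
  | cons p E ih => simp [fvE, ih, or_assoc]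

lemma sizeE_cons (p : L.Term V × L.Term V) (E : List (L.Term V × L.Term V)) :
    sizeE (p :: E) = tsize p.1 + tsize p.2 + sizeE E := by
  simp [sizeE]

lemma sizeE_append (A B : List (L.Term V × L.Term V)) :
    sizeE (A ++ B) = sizeE A + sizeE B := by
  simp [sizeE]

lemma sizeE_ofFn {n : ℕ} (g : Fin n → L.Term V × L.Term V) :
    sizeE (List.ofFn g) = ∑ i, (tsize (g i).1 + tsize (g i).2) := by
  simp [sizeE, List.map_ofFn, List.sum_ofFn, Function.comp]

lemma unif_cons {τ : V → L.Term V} {p : L.Term V × L.Term V} {E : List (L.Term V × L.Term V)} :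
    Unif τ (p :: E) ↔ p.1.subst τ = p.2.subst τ ∧ Unif τ E := by
  simp [Unif]

lemma unif_append {τ : V → L.Term V} {A B : List (L.Term V × L.Term V)} :
    Unif τ (A ++ B) ↔ Unif τ A ∧ Unif τ B := by
  simp [Unif, or_imp, forall_and]

lemma unif_ofFn {τ : V → L.Term V} {n : ℕ} (g : Fin n → L.Term V × L.Term V) :
    Unif τ (List.ofFn g) ↔ ∀ i, (g i).1.subst τ = (g i).2.subst τ := by
  constructor
  · intro h i; exact h (g i) (by rw [List.mem_ofFn]; exact ⟨i, rfl⟩)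
  · intro h p hp
    rw [List.mem_ofFn] at hp
    obtain ⟨i, rfl⟩ := hp
    exact h i

/-- The main lemma: every solvable system of equations has a most general unifier. -/
theorem mgu_aux [DecidableEq V] (n : ℕ) : ∀ k (E : List (L.Term V × L.Term V)),
    (fvE E).card ≤ n → sizeE E ≤ k → (∃ τ, Unif τ E) →
    ∃ σ : V → L.Term V, Unif σ E ∧
      ∀ τ, Unif τ E → ∃ ρ, ∀ x, τ x = (σ x).subst ρ := by
  induction n using Nat.strong_induction_on with
  | _ n IHn =>
  intro k
  induction k using Nat.strong_induction_on with
  | _ k IHk =>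
  intro E hn hk hsol
  -- the variable-elimination step, for a first equation of the form `var x = s`
  have key : ∀ (x : V) (s : L.Term V) (E' : List (L.Term V × L.Term V)),
      (fvE ((Term.var x, s) :: E')).card ≤ n → sizeE ((Term.var x, s) :: E') ≤ k →
      (∃ τ, Unif τ ((Term.var x, s) :: E')) →
      ∃ σ : V → L.Term V, Unif σ ((Term.var x, s) :: E') ∧
        ∀ τ, Unif τ ((Term.var x, s) :: E') → ∃ ρ, ∀ y, τ y = (σ y).subst ρ := by
    clear hn hk hsol E
    rintro x s E' hn hk ⟨τ₀, hτ₀⟩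
    rw [unif_cons] at hτ₀
    by_cases hs : s = Term.var x
    · -- trivial equation: drop it
      subst hs
      have hsz : sizeE E' < k := by
        have h1 : sizeE ((Term.var x, Term.var x) :: E') =
            tsize (Term.var x : L.Term V) + tsize (Term.var x : L.Term V) + sizeE E' :=
          sizeE_cons _ _
        have h2 := tsize_pos (L := L) (V := V) (Term.var x)
        omega
      have hfv : fvE E' ⊆ fvE ((Term.var x, Term.var x) :: E') := fun y hy => by
        rw [mem_fvE] at hy ⊢
        obtain ⟨p, hp, h⟩ := hy
        exact ⟨p, List.mem_cons_of_mem _ hp, h⟩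
      obtain ⟨σ, hσu, hσm⟩ := IHk (sizeE E') hsz E'
        (le_trans (card_le_card hfv) hn) le_rfl ⟨τ₀, hτ₀.2⟩
      exact ⟨σ, unif_cons.2 ⟨rfl, hσu⟩, fun τ hτ => hσm τ (unif_cons.1 hτ).2⟩
    · by_cases hx : x ∈ s.varFinset
      · -- occurs check fails: contradicts solvability
        exfalso
        have hlt := tsize_subst_lt hx hs τ₀
        have h1 : τ₀ x = s.subst τ₀ := hτ₀.1
        rw [← h1] at hlt
        exact lt_irrefl _ hlt
      · -- eliminate the variable x
        set σ₀ : V → L.Term V := fun y => if y = x then s else Term.var y with hσ₀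
        have hσ₀x : σ₀ x = s := by simp [hσ₀]
        have hsσ₀ : s.subst σ₀ = s := by
          rw [show s.subst σ₀ = s.subst Term.var from
            subst_congr fun z hz => by
              have hzx : z ≠ x := fun h => hx (h ▸ hz)
              simp [hσ₀, hzx], subst_var']
        have hstep : ∀ (τ : V → L.Term V), τ x = s.subst τ →
            ∀ u : L.Term V, (u.subst σ₀).subst τ = u.subst τ := by
          intro τ hτ u
          rw [subst_comp]
          congr 1
          funext y
          by_cases hyx : y = x
          · subst hyx; simp [hσ₀, ← hτ]
          · simp [hσ₀, hyx]
        set E'' := E'.map (fun p => (p.1.subst σ₀, p.2.subst σ₀)) with hE''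
        have hequiv : ∀ τ, Unif τ ((Term.var x, s) :: E') ↔
            (τ x = s.subst τ ∧ Unif τ E'') := by
          intro τ
          rw [unif_cons]
          constructor
          · rintro ⟨h1, h2⟩
            have h1' : τ x = s.subst τ := h1
            refine ⟨h1', fun p hp => ?_⟩
            rw [hE'', List.mem_map] at hp
            obtain ⟨q, hq, rfl⟩ := hp
            simpa [hstep τ h1' q.1, hstep τ h1' q.2] using h2 q hq
          · rintro ⟨h1, h2⟩
            refine ⟨h1, fun q hq => ?_⟩
            have := h2 (q.1.subst σ₀, q.2.subst σ₀)
              (by rw [hE'', List.mem_map]; exact ⟨q, hq, rfl⟩)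
            simp only at this
            rw [hstep τ h1 q.1, hstep τ h1 q.2] at this
            exact this
        have hxmem : x ∈ fvE ((Term.var x, s) :: E') :=
          mem_fvE.2 ⟨(Term.var x, s), List.mem_cons_self, Or.inl (by simp)⟩
        have hsub : fvE E'' ⊆ (fvE ((Term.var x, s) :: E')).erase x := by
          intro y hy
          rw [mem_fvE] at hy
          obtain ⟨p, hp, hmem⟩ := hy
          rw [hE'', List.mem_map] at hp
          obtain ⟨q, hq, rfl⟩ := hp
          have hex : ∃ z, (z ∈ q.1.varFinset ∨ z ∈ q.2.varFinset) ∧ y ∈ (σ₀ z).varFinset := by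
            cases hmem with
            | inl h => obtain ⟨z, hz, hy'⟩ := mem_varFinset_subst h; exact ⟨z, Or.inl hz, hy'⟩
            | inr h => obtain ⟨z, hz, hy'⟩ := mem_varFinset_subst h; exact ⟨z, Or.inr hz, hy'⟩
          obtain ⟨z, hz, hyz⟩ := hex
          by_cases hzx : z = x
          · subst hzx
            rw [hσ₀x] at hyz
            rw [mem_erase]
            exact ⟨fun hyx => hx (hyx ▸ hyz),
              mem_fvE.2 ⟨(Term.var z, s), List.mem_cons_self, Or.inr hyz⟩⟩
          · have hy' : y = z := by simpa [hσ₀, hzx] using hyz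
            subst hy'
            rw [mem_erase]
            exact ⟨hzx, mem_fvE.2 ⟨q, List.mem_cons_of_mem _ hq, hz⟩⟩
        have hcard : (fvE E'').card < n :=
          lt_of_le_of_lt (card_le_card hsub) (lt_of_lt_of_le (card_erase_lt_of_mem hxmem) hn)
        have hτ₀x : τ₀ x = s.subst τ₀ := hτ₀.1
        obtain ⟨σ', hσ'u, hσ'm⟩ := IHn (fvE E'').card hcard (sizeE E'') E'' le_rfl le_rfl
          ⟨τ₀, ((hequiv τ₀).1 (unif_cons.2 hτ₀)).2⟩
        refine ⟨fun y => (σ₀ y).subst σ', ?_, ?_⟩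
        · rw [unif_cons]
          constructor
          · show (σ₀ x).subst σ' = s.subst fun y => (σ₀ y).subst σ'
            rw [hσ₀x, ← subst_comp, hsσ₀]
          · intro q hq
            show q.1.subst (fun y => (σ₀ y).subst σ') = q.2.subst fun y => (σ₀ y).subst σ'
            rw [← subst_comp, ← subst_comp]
            exact hσ'u (q.1.subst σ₀, q.2.subst σ₀)
              (by rw [hE'', List.mem_map]; exact ⟨q, hq, rfl⟩)
        · intro τ hτ
          obtain ⟨h1, h2⟩ := (hequiv τ).1 hτ
          obtain ⟨ρ, hρ⟩ := hσ'm τ h2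
          refine ⟨ρ, fun y => ?_⟩
          have hcalc : ((σ₀ y).subst σ').subst ρ = (σ₀ y).subst τ := by
            rw [subst_comp]
            congr 1
            funext z
            exact (hρ z).symm
          rw [hcalc]
          by_cases hyx : y = x
          · subst hyx; rw [hσ₀x, ← h1]
          · simp [hσ₀, hyx]
  -- now the case analysis on the system
  match E with
  | [] =>
    refine ⟨Term.var, fun p hp => absurd hp List.not_mem_nil, fun τ _ => ⟨τ, fun y => rfl⟩⟩
  | (t, s) :: E' =>
    match t with
    | .var x => exact key x s E' hn hk hsol
    | .func f ts =>
      match s with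
      | .var y =>
        -- swap the first equation and use `key`
        have hfv : fvE ((Term.var y, Term.func f ts) :: E') = fvE ((Term.func f ts, Term.var y) :: E') := by
          simp only [fvE]
          rw [union_comm (Term.var y).varFinset]
        have hsz : sizeE ((Term.var y, Term.func f ts) :: E') = sizeE ((Term.func f ts, Term.var y) :: E') := by
          have h1 : sizeE ((Term.var y, Term.func f ts) :: E') =
              tsize (Term.var y : L.Term V) + tsize (Term.func f ts) + sizeE E' := sizeE_cons _ _
          have h2 : sizeE ((Term.func f ts, Term.var y) :: E') =
              tsize (Term.func f ts) + tsize (Term.var y : L.Term V) + sizeE E' := sizeE_cons _ _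
          omega
        have hswap : ∀ τ, Unif τ ((Term.var y, Term.func f ts) :: E') ↔
            Unif τ ((Term.func f ts, Term.var y) :: E') := by
          intro τ
          rw [unif_cons, unif_cons]
          constructor <;> rintro ⟨h1, h2⟩ <;> exact ⟨h1.symm, h2⟩
        obtain ⟨τ₀, hτ₀⟩ := hsol
        obtain ⟨σ, hσu, hσm⟩ := key y (Term.func f ts) E' (hfv ▸ hn) (hsz ▸ hk)
          ⟨τ₀, (hswap τ₀).2 hτ₀⟩
        exact ⟨σ, (hswap σ).1 hσu, fun τ hτ => hσm τ ((hswap τ).2 hτ)⟩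
      | .func g ss =>
        obtain ⟨τ₀, hτ₀⟩ := hsol
        rw [unif_cons] at hτ₀
        obtain ⟨h1, h2⟩ := hτ₀
        simp only [Term.subst] at h1
        injection h1 with harr hf hargs
        subst harr
        have hf' : f = g := eq_of_heq hf
        subst hf'
        -- decompose into argument equations
        set E'' := (List.ofFn fun i => (ts i, ss i)) ++ E' with hE''
        have hequiv : ∀ τ, Unif τ ((Term.func f ts, Term.func f ss) :: E') ↔ Unif τ E'' := by
          intro τ
          rw [hE'', unif_append, unif_cons, unif_ofFn]
          constructor
          · rintro ⟨ha, hb⟩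
            refine ⟨fun i => ?_, hb⟩
            simp only [Term.subst] at ha
            injection ha with h1' h2' hargs'
            exact congrFun hargs' i
          · rintro ⟨ha, hb⟩
            refine ⟨?_, hb⟩
            simp only [Term.subst]
            congr 1
            funext i
            exact ha i
        have hfvsub : fvE E'' ⊆ fvE ((Term.func f ts, Term.func f ss) :: E') := by
          intro z hz
          rw [mem_fvE] at hz ⊢
          obtain ⟨p, hp, hmem⟩ := hz
          rw [hE'', List.mem_append] at hp
          cases hp with
          | inl hp =>
            rw [List.mem_ofFn] at hp
            obtain ⟨i, rfl⟩ := hp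
            refine ⟨(Term.func f ts, Term.func f ss), List.mem_cons_self, ?_⟩
            cases hmem with
            | inl h =>
              exact Or.inl (by
                simp only [Term.varFinset, mem_biUnion]; exact ⟨i, mem_univ i, h⟩)
            | inr h =>
              exact Or.inr (by
                simp only [Term.varFinset, mem_biUnion]; exact ⟨i, mem_univ i, h⟩)
          | inr hp => exact ⟨p, List.mem_cons_of_mem _ hp, hmem⟩
        have hszlt : sizeE E'' < k := by
          have e1 : sizeE E'' = (∑ i, (tsize (ts i) + tsize (ss i))) + sizeE E' := by
            rw [hE'', sizeE_append, sizeE_ofFn]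
          have e2 : sizeE ((Term.func f ts, Term.func f ss) :: E') =
              (1 + ∑ i, tsize (ts i)) + (1 + ∑ i, tsize (ss i)) + sizeE E' := by
            rw [sizeE_cons]; simp [tsize]
          have e3 : (∑ i, (tsize (ts i) + tsize (ss i))) =
              (∑ i, tsize (ts i)) + ∑ i, tsize (ss i) := Finset.sum_add_distrib
          omega
        obtain ⟨σ, hσu, hσm⟩ := IHk (sizeE E'') hszlt E''
          (le_trans (card_le_card hfvsub) hn) le_rfl
          ⟨τ₀, (hequiv τ₀).1 (unif_cons.2
            ⟨by simp only [Term.subst]; exact congrArg _ (eq_of_heq hargs), h2⟩)⟩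
        refine ⟨σ, (hequiv σ).2 hσu, fun τ hτ => hσm τ ((hequiv τ).1 hτ)⟩

end MGUaux

/-- First-order unification produces most general unifiers: if two first-order
terms `t` and `s` (built from variables in `V` and the function symbols of a
language `L`) are unifiable, then there is a unifier `σ` such that every unifier
`τ` of `t` and `s` factors through `σ`: there is a substitution `ρ` with
`xτ = (xσ)ρ` for every variable `x`. -/
theorem exists_most_general_unifier {L : Language} {V : Type}
    (t s : L.Term V)
    (h : ∃ σ : V → L.Term V, t.subst σ = s.subst σ) :
    ∃ σ : V → L.Term V, t.subst σ = s.subst σ ∧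
      ∀ τ : V → L.Term V, t.subst τ = s.subst τ →
        ∃ ρ : V → L.Term V, ∀ x : V, τ x = (σ x).subst ρ := by
  classical
  obtain ⟨τ₀, hτ₀⟩ := h
  obtain ⟨σ, hσu, hσm⟩ := MGUaux.mgu_aux (MGUaux.fvE [(t, s)]).card (MGUaux.sizeE [(t, s)])
    [(t, s)] le_rfl le_rfl ⟨τ₀, by simp [MGUaux.Unif, hτ₀]⟩
  refine ⟨σ, hσu (t, s) (List.mem_cons_self), fun τ hτ => ?_⟩
  exact hσm τ (by simp [MGUaux.Unif, hτ])
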